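/- Let f = (P,Q) : ℂ² → ℂ² be a polynomial map with non-zero constant Jacobian J(P,Q) ≡ const ≠ 0, in affine coordinates (x,y) in which P and Q are monic in y. Let φ be a Newton-Puiseux type of P. If φ is not a dicritical series of f, then deg p_φ(ξ) = 1, q_φ(ξ) ≡ const ≠ 0, and b_φ > 0. -/

import Mathlib

open Filter Topology

noncomputable section

/-! ### Basic notions: polynomial maps of `ℂ²` and their Jacobian -/

/-- Evaluation of a polynomial in two variables at a point of `ℂ × ℂ`. -/
def pev (P : MvPolynomial (Fin 2) ℂ) (p : ℂ × ℂ) : ℂ :=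
  MvPolynomial.eval (fun i : Fin 2 => if i = 0 then p.1 else p.2) P

/-- The Jacobian polynomial `J(P,Q) = P_x Q_y - P_y Q_x`. -/
def jac (P Q : MvPolynomial (Fin 2) ℂ) : MvPolynomial (Fin 2) ℂ :=
  MvPolynomial.pderiv 0 P * MvPolynomial.pderiv 1 Q -
    MvPolynomial.pderiv 1 P * MvPolynomial.pderiv 0 Q

/-- The polynomial map `ℂ² → ℂ²` with components `P`, `Q`. -/
def polyMap (P Q : MvPolynomial (Fin 2) ℂ) : ℂ × ℂ → ℂ × ℂ :=
  fun p => (pev P p, pev Q p)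

/-! ### Exceptional value sets -/

/-- `h` restricts to a locally trivial fibration over the complement of `E`. -/
def IsLocallyTrivialOff {X Y : Type} [TopologicalSpace X] [TopologicalSpace Y]
    (h : X → Y) (E : Set Y) : Prop :=
  ∀ y ∉ E, ∃ U : Set Y, IsOpen U ∧ y ∈ U ∧ U ⊆ Eᶜ ∧
    ∃ (F : Type) (_ : TopologicalSpace F) (φ : (h ⁻¹' U) ≃ₜ U × F),
      ∀ x : h ⁻¹' U, ((φ x).1 : Y) = h x

/-- `E` is the exceptional value set of `h`: the smallest subset of the target
off which `h` is a locally trivial fibration. -/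
def IsExceptionalValueSet {X Y : Type} [TopologicalSpace X] [TopologicalSpace Y]
    (h : X → Y) (E : Set Y) : Prop :=
  IsLocallyTrivialOff h E ∧ ∀ E', IsLocallyTrivialOff h E' → E ⊆ E'

/-! ### Local branches and tangency to vertical lines -/

/-- The line `u = u₀` is tangent to some irreducible local branch of the curve `C`:
there is an injective analytic arc `γ` inside `C` through a point with first
coordinate `u₀`, whose tangent direction is vertical, i.e. the vanishing order of the
second component is smaller than that of the first component. -/
def TangentToVerticalBranch (C : Set (ℂ × ℂ)) (u₀ : ℂ) : Prop :=
  ∃ γ : ℂ → ℂ × ℂ,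
    γ 0 ∈ C ∧ (γ 0).1 = u₀ ∧ (∀ᶠ t in 𝓝 (0 : ℂ), γ t ∈ C) ∧
    (∃ V ∈ 𝓝 (0 : ℂ), Set.InjOn γ V) ∧
    ∃ (h₁ : AnalyticAt ℂ (fun t => (γ t).1 - u₀) 0)
      (h₂ : AnalyticAt ℂ (fun t => (γ t).2 - (γ 0).2) 0),
      analyticOrderAt (fun t => (γ t).2 - (γ 0).2) 0 < analyticOrderAt (fun t => (γ t).1 - u₀) 0

/-! ### Finite fractional series with parameter -/

/-- A finite fractional series with parameter,
`φ(x,ξ) = Σ_{k=1}^{K-1} a_k x^{n_k/m} + ξ x^{n_K/m}`, with `0 ≠ a_k ∈ ℂ`,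
`n_1 > n_2 > ⋯ > n_K`, `m ∈ ℕ`, and `gcd{n_k} = 1`. Indices are `0,…,K-1`;
the coefficient of the last term is the parameter `ξ` (the entries `a k` for
`k = K-1` are irrelevant). -/
structure FracSeries where
  K : ℕ
  m : ℕ
  hK : 0 < K
  hm : 0 < m
  n : Fin K → ℤ
  a : Fin K → ℂ
  hn : StrictAnti n
  ha : ∀ k : Fin K, k.val + 1 < K → a k ≠ 0
  hgcd : (Finset.univ : Finset (Fin K)).gcd (fun k => (n k).natAbs) = 1

/-- `ord(φ) = n_K`, the last (smallest) exponent numerator. -/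
def FracSeries.ordK (φ : FracSeries) : ℤ := φ.n ⟨φ.K - 1, Nat.sub_lt φ.hK Nat.one_pos⟩

/-- The value of the fractional series after the substitution `x = t^{-m}`,
so that `x^{n_k/m} = t^{-n_k}`:  `φ.val t ξ = Σ_{k<K-1} a_k t^{-n_k} + ξ t^{-n_K}`. -/
def FracSeries.val (φ : FracSeries) (t ξ : ℂ) : ℂ :=
  (∑ k ∈ Finset.univ.filter (fun k : Fin φ.K => k.val + 1 < φ.K),
      φ.a k * t ^ (-(φ.n k))) + ξ * t ^ (-(φ.ordK))

/-! ### Dicritical series and Newton-Puiseux types -/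

/-- `φ` is a dicritical series of `f`:
`f(x, φ(x,ξ)) = f_φ(ξ) + lower order terms in x`, where `f_φ : ℂ → ℂ²` is a polynomial
map with `deg f_φ > 0`.  In the variable `t` (with `x = t^{-mult(φ)}`), "lower order
terms in `x`" are positive powers of `t`, i.e. `f(t^{-m}, φ(t^{-m},ξ)) → f_φ(ξ)` as `t → 0`. -/
def IsDicriticalSeries (f : ℂ × ℂ → ℂ × ℂ) (φ : FracSeries) (fφ : ℂ → ℂ × ℂ) : Prop :=
  (∃ p q : Polynomial ℂ, (∀ ξ, fφ ξ = (p.eval ξ, q.eval ξ)) ∧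
      (0 < p.natDegree ∨ 0 < q.natDegree)) ∧
  ∀ ξ : ℂ, Filter.Tendsto (fun t : ℂ => f (t ^ (-(φ.m : ℤ)), φ.val t ξ))
    (𝓝[≠] (0 : ℂ)) (𝓝 (fφ ξ))

/-- `φ` is a Newton-Puiseux type of `h` with associated polynomial `h_φ`:
`h(x, φ(x,ξ)) = h_φ(ξ) + lower order terms in x`, with `deg h_φ > 0`. -/
def IsNewtonPuiseuxType (h : MvPolynomial (Fin 2) ℂ) (φ : FracSeries)
    (hφ : Polynomial ℂ) : Prop :=
  0 < hφ.natDegree ∧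
  ∀ ξ : ℂ, Filter.Tendsto (fun t : ℂ => pev h (t ^ (-(φ.m : ℤ)), φ.val t ξ))
    (𝓝[≠] (0 : ℂ)) (𝓝 (hφ.eval ξ))

/-! ### Non-proper value set -/

/-- The non-proper value set `A_f` of `f : ℂ² → ℂ²`: values `a` for which some sequence
`p_i → ∞` has `f(p_i) → a`. -/
def NonProperValueSet (f : ℂ × ℂ → ℂ × ℂ) : Set (ℂ × ℂ) :=
  {a | ∃ p : ℕ → ℂ × ℂ, Filter.Tendsto (fun i => ‖p i‖) Filter.atTop Filter.atTop ∧
    Filter.Tendsto (fun i => f (p i)) Filter.atTop (𝓝 a)}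

/-! ### Monic-in-`y` and primitive polynomials -/

/-- `h` is monic in `y` with `deg_y h = deg h`. -/
def MonicInY (h : MvPolynomial (Fin 2) ℂ) : Prop :=
  MvPolynomial.degreeOf 1 h = h.totalDegree ∧
  MvPolynomial.coeff (Finsupp.single 1 h.totalDegree) h = 1

/-- `h` is a primitive polynomial: it is not a nontrivial one-variable polynomial
composed with another polynomial. -/
def PrimitivePoly (h : MvPolynomial (Fin 2) ℂ) : Prop :=
  ∀ (u : Polynomial ℂ) (g : MvPolynomial (Fin 2) ℂ), h = Polynomial.aeval g u →
    u.natDegree ≤ 1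

/-! ### Polynomial automorphisms and special curves -/

/-- `g : ℂ² → ℂ²` is a polynomial map. -/
def IsPolyMap2 (g : ℂ × ℂ → ℂ × ℂ) : Prop :=
  ∃ A B : MvPolynomial (Fin 2) ℂ, ∀ p, g p = (pev A p, pev B p)

/-- `g` is a polynomial automorphism of `ℂ²` (an algebraic change of coordinates). -/
def IsPolyAutomorphism (g : ℂ × ℂ → ℂ × ℂ) : Prop :=
  IsPolyMap2 g ∧ ∃ g' : ℂ × ℂ → ℂ × ℂ, IsPolyMap2 g' ∧
    Function.LeftInverse g' g ∧ Function.RightInverse g' g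

/-- `C` is a curve composed of the images of finitely many polynomial maps of the
form `t ↦ (t^k, q(t))`, `k ∈ ℕ` (`k ≥ 1`), `q ∈ ℂ[t]`. -/
def IsSpecialCurve (C : Set (ℂ × ℂ)) : Prop :=
  ∃ S : Finset (ℕ × Polynomial ℂ), S.Nonempty ∧ (∀ s ∈ S, 0 < s.1) ∧
    C = ⋃ s ∈ S, Set.range (fun t : ℂ => (t ^ s.1, s.2.eval t))

/-- `C` is an algebraic curve in `ℂ²`: the zero set of a nonconstant polynomial. -/
def IsAlgebraicCurve (C : Set (ℂ × ℂ)) : Prop :=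
  ∃ R : MvPolynomial (Fin 2) ℂ, 0 < R.totalDegree ∧ C = {p : ℂ × ℂ | pev R p = 0}

namespace S5

open Polynomial



def ev2 (R : Polynomial (Polynomial ℂ)) (t ξ : ℂ) : ℂ := (R.map (evalRingHom ξ)).eval t

def ev2RH (t ξ : ℂ) : Polynomial (Polynomial ℂ) →+* ℂ :=
  (evalRingHom t).comp (mapRingHom (evalRingHom ξ))

lemma ev2_eq (R : Polynomial (Polynomial ℂ)) (t ξ : ℂ) : ev2 R t ξ = ev2RH t ξ R := rfl

@[simp] lemma ev2_add (R S : Polynomial (Polynomial ℂ)) (t ξ : ℂ) :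
    ev2 (R + S) t ξ = ev2 R t ξ + ev2 S t ξ := by simp [ev2_eq]

@[simp] lemma ev2_mul (R S : Polynomial (Polynomial ℂ)) (t ξ : ℂ) :
    ev2 (R * S) t ξ = ev2 R t ξ * ev2 S t ξ := by simp [ev2_eq]

@[simp] lemma ev2_C (p : Polynomial ℂ) (t ξ : ℂ) : ev2 (C p) t ξ = p.eval ξ := by
  simp [ev2]

@[simp] lemma ev2_X (t ξ : ℂ) : ev2 X t ξ = t := by simp [ev2]

@[simp] lemma ev2_X_pow (k : ℕ) (t ξ : ℂ) : ev2 (X ^ k) t ξ = t ^ k := by simp [ev2_eq, ev2RH]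

@[simp] lemma ev2_one (t ξ : ℂ) : ev2 1 t ξ = 1 := by simp [ev2]

lemma ev2_zero_left (R : Polynomial (Polynomial ℂ)) (ξ : ℂ) :
    ev2 R 0 ξ = (R.coeff 0).eval ξ := by
  rw [ev2, ← coeff_zero_eq_eval_zero, coeff_map]; rfl

lemma ev2_continuous (R : Polynomial (Polynomial ℂ)) (ξ : ℂ) :
    Continuous (fun t => ev2 R t ξ) := by
  simpa [ev2] using (R.map (evalRingHom ξ)).continuous

lemma hasDerivAt_ev2_t (R : Polynomial (Polynomial ℂ)) (t ξ : ℂ) :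
    HasDerivAt (fun t => ev2 R t ξ) (ev2 (derivative R) t ξ) t := by
  have := (R.map (evalRingHom ξ)).hasDerivAt t
  simpa [ev2, derivative_map] using this

def Dxi (R : Polynomial (Polynomial ℂ)) : Polynomial (Polynomial ℂ) :=
  R.sum fun n c => C (derivative c) * X ^ n

lemma ev2_sum_eq (R : Polynomial (Polynomial ℂ)) (t ξ : ℂ) :
    ev2 R t ξ = ∑ n ∈ R.support, (R.coeff n).eval ξ * t ^ n := by
  conv_lhs => rw [ev2_eq, R.as_sum_support]
  rw [map_sum]
  refine Finset.sum_congr rfl fun n hn => ?_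
  simp [ev2RH, coeff_monomial]

lemma ev2_Dxi_eq (R : Polynomial (Polynomial ℂ)) (t ξ : ℂ) :
    ev2 (Dxi R) t ξ = ∑ n ∈ R.support, ((R.coeff n).derivative).eval ξ * t ^ n := by
  rw [ev2_eq, Dxi, Polynomial.sum, map_sum]
  refine Finset.sum_congr rfl fun n hn => ?_
  rw [← ev2_eq, ev2_mul, ev2_C, ev2_X_pow]

lemma hasDerivAt_ev2_xi (R : Polynomial (Polynomial ℂ)) (t ξ : ℂ) :
    HasDerivAt (fun ξ => ev2 R t ξ) (ev2 (Dxi R) t ξ) ξ := by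
  have h : ∀ ξ', ev2 R t ξ' = ∑ n ∈ R.support, (R.coeff n).eval ξ' * t ^ n :=
    fun ξ' => ev2_sum_eq R t ξ'
  rw [funext h, ev2_Dxi_eq]
  exact HasDerivAt.fun_sum fun n _ => ((R.coeff n).hasDerivAt ξ).mul_const _

lemma ev2_Dxi_zero (R : Polynomial (Polynomial ℂ)) (ξ : ℂ) :
    ev2 (Dxi R) 0 ξ = (derivative (R.coeff 0)).eval ξ := by
  have h1 := hasDerivAt_ev2_xi R 0 ξ
  have h2 : (fun ξ' => ev2 R 0 ξ') = fun ξ' => (R.coeff 0).eval ξ' :=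
    funext fun ξ' => ev2_zero_left R ξ'
  rw [h2] at h1
  exact h1.unique ((R.coeff 0).hasDerivAt ξ)



lemma coeff_extract : ∀ (M : ℕ) (p : Polynomial ℂ) (l : ℂ),
    Tendsto (fun t : ℂ => (t ^ M)⁻¹ * p.eval t) (𝓝[≠] 0) (𝓝 l) →
    (∀ k < M, p.coeff k = 0) ∧ p.coeff M = l := by
  intro M
  induction M with
  | zero =>
    intro p l h
    have h' : Tendsto (fun t : ℂ => p.eval t) (𝓝[≠] 0) (𝓝 l) := by
      simpa using h
    have h2 : Tendsto (fun t : ℂ => p.eval t) (𝓝[≠] 0) (𝓝 (p.eval 0)) :=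
      (p.continuous_aeval.tendsto 0).mono_left nhdsWithin_le_nhds
    refine ⟨fun k hk => absurd hk (Nat.not_lt_zero k), ?_⟩
    rw [coeff_zero_eq_eval_zero]
    exact tendsto_nhds_unique h2 h'
  | succ M ih =>
    intro p l h
    have h0 : Tendsto (fun t : ℂ => (t ^ M)⁻¹ * p.eval t) (𝓝[≠] 0) (𝓝 0) := by
      have heq : ∀ᶠ t in 𝓝[≠] (0:ℂ), t * ((t ^ (M+1))⁻¹ * p.eval t) = (t ^ M)⁻¹ * p.eval t := by
        filter_upwards [self_mem_nhdsWithin] with t ht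
        have ht' : (t:ℂ) ≠ 0 := ht
        field_simp
        ring
      have hmul : Tendsto (fun t : ℂ => t * ((t ^ (M+1))⁻¹ * p.eval t)) (𝓝[≠] 0) (𝓝 (0 * l)) := by
        exact (tendsto_id.mono_left nhdsWithin_le_nhds).mul h
      rw [zero_mul] at hmul
      exact hmul.congr' heq
    obtain ⟨hlow, hM⟩ := ih p 0 h0
    have hcoeffs : ∀ k < M + 1, p.coeff k = 0 := by
      intro k hk
      rcases Nat.lt_or_ge k M with h' | h'
      · exact hlow k h'
      · have : k = M := le_antisymm (Nat.lt_succ_iff.mp hk) h'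
        rw [this]; exact hM
    obtain ⟨q, hq⟩ : X ^ (M+1) ∣ p := (X_pow_dvd_iff).2 hcoeffs
    have heq2 : ∀ᶠ t in 𝓝[≠] (0:ℂ), (t ^ (M+1))⁻¹ * p.eval t = q.eval t := by
      filter_upwards [self_mem_nhdsWithin] with t ht
      have ht' : (t:ℂ) ≠ 0 := ht
      rw [hq]
      simp only [eval_mul, eval_pow, eval_X]
      field_simp
    have h2 : Tendsto (fun t : ℂ => q.eval t) (𝓝[≠] 0) (𝓝 (q.eval 0)) :=
      (q.continuous_aeval.tendsto 0).mono_left nhdsWithin_le_nhds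
    have hl : l = q.eval 0 := tendsto_nhds_unique (h.congr' heq2) h2
    refine ⟨hcoeffs, ?_⟩
    have := coeff_X_pow_mul q (M+1) 0
    rw [zero_add] at this
    rw [hq, this, hl, coeff_zero_eq_eval_zero]

lemma extract2 (M : ℕ) (R : Polynomial (Polynomial ℂ)) (l : Polynomial ℂ)
    (h : ∀ ξ : ℂ, Tendsto (fun t : ℂ => (t ^ M)⁻¹ * ev2 R t ξ) (𝓝[≠] 0) (𝓝 (l.eval ξ))) :
    ∃ S : Polynomial (Polynomial ℂ),
      (∀ t ξ : ℂ, ev2 R t ξ = t ^ M * ev2 S t ξ) ∧ S.coeff 0 = l := by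
  have key : ∀ ξ : ℂ, (∀ k < M, ((R.coeff k).eval ξ : ℂ) = 0) ∧ (R.coeff M).eval ξ = l.eval ξ := by
    intro ξ
    have h' := coeff_extract M (R.map (evalRingHom ξ)) (l.eval ξ) (h ξ)
    constructor
    · intro k hk
      have := h'.1 k hk
      rwa [coeff_map] at this
    · have := h'.2
      rwa [coeff_map] at this
  have hlow : ∀ k < M, R.coeff k = 0 := fun k hk =>
    Polynomial.funext fun ξ => by rw [(key ξ).1 k hk]; simp
  obtain ⟨S, hS⟩ : X ^ M ∣ R := (X_pow_dvd_iff).2 hlow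
  have hM : R.coeff M = l := Polynomial.funext fun ξ => (key ξ).2
  refine ⟨S, fun t ξ => by rw [hS, ev2_mul, ev2_X_pow], ?_⟩
  have := coeff_X_pow_mul S M 0
  rw [zero_add, ← hS, hM] at this
  exact this.symm

lemma pev_hasDerivAt (P : MvPolynomial (Fin 2) ℂ) (x y : ℂ → ℂ) {x' y' : ℂ} {t₀ : ℂ}
    (hx : HasDerivAt x x' t₀) (hy : HasDerivAt y y' t₀) :
    HasDerivAt (fun t => pev P (x t, y t))
      (pev (MvPolynomial.pderiv 0 P) (x t₀, y t₀) * x' +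
        pev (MvPolynomial.pderiv 1 P) (x t₀, y t₀) * y') t₀ := by
  induction P using MvPolynomial.induction_on with
  | C a =>
    simp only [pev, MvPolynomial.eval_C, MvPolynomial.pderiv_C, map_zero, zero_mul, add_zero]
    exact hasDerivAt_const _ _
  | add p q hp hq =>
    have := hp.fun_add hq
    have e : (fun t => pev (p + q) (x t, y t)) = fun i => pev p (x i, y i) + pev q (x i, y i) := by
      ext t; simp only [pev, map_add]
    rw [e]
    refine this.congr_deriv ?_
    simp only [pev, map_add]; ring
  | mul_X p i hp =>
    fin_cases i
    · have h2 : HasDerivAt (fun t => pev p (x t, y t) * x t)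
          ((pev (MvPolynomial.pderiv 0 p) (x t₀, y t₀) * x' +
            pev (MvPolynomial.pderiv 1 p) (x t₀, y t₀) * y') * x t₀
            + pev p (x t₀, y t₀) * x') t₀ := hp.mul hx
      convert h2 using 1
      · ext t; simp [pev]
      · simp [pev, MvPolynomial.pderiv_mul]; ring
    · have h2 : HasDerivAt (fun t => pev p (x t, y t) * y t)
          ((pev (MvPolynomial.pderiv 0 p) (x t₀, y t₀) * x' +
            pev (MvPolynomial.pderiv 1 p) (x t₀, y t₀) * y') * y t₀
            + pev p (x t₀, y t₀) * y') t₀ := hp.mul hy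
      convert h2 using 1
      · ext t; simp [pev]
      · simp [pev, MvPolynomial.pderiv_mul]; ring

def IsLP (u : ℂ → ℂ → ℂ) : Prop := ∃ (M : ℕ) (R : Polynomial (Polynomial ℂ)),
  ∀ t : ℂ, t ≠ 0 → ∀ ξ : ℂ, u t ξ = (t ^ M)⁻¹ * ev2 R t ξ

lemma IsLP.add {u v : ℂ → ℂ → ℂ} (hu : IsLP u) (hv : IsLP v) :
    IsLP (fun t ξ => u t ξ + v t ξ) := by
  obtain ⟨M1, R1, h1⟩ := hu
  obtain ⟨M2, R2, h2⟩ := hv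
  refine ⟨M1 + M2, X ^ M2 * R1 + X ^ M1 * R2, fun t ht ξ => ?_⟩
  show u t ξ + v t ξ = _
  rw [h1 t ht ξ, h2 t ht ξ, ev2_add, ev2_mul, ev2_mul, ev2_X_pow, ev2_X_pow]
  field_simp
  ring

lemma IsLP.mul {u v : ℂ → ℂ → ℂ} (hu : IsLP u) (hv : IsLP v) :
    IsLP (fun t ξ => u t ξ * v t ξ) := by
  obtain ⟨M1, R1, h1⟩ := hu
  obtain ⟨M2, R2, h2⟩ := hv
  refine ⟨M1 + M2, R1 * R2, fun t ht ξ => ?_⟩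
  show u t ξ * v t ξ = _
  rw [h1 t ht ξ, h2 t ht ξ, ev2_mul, pow_add, mul_inv]
  ring

lemma isLP_const (a : ℂ) : IsLP (fun _ _ => a) :=
  ⟨0, C (C a), fun t ht ξ => by simp⟩

lemma zpow_split (t : ℂ) (ht : t ≠ 0) (n : ℤ) :
    t ^ (-n) = (t ^ n.toNat)⁻¹ * t ^ ((-n).toNat) := by
  have h : -n = ((-n).toNat : ℤ) - (n.toNat : ℤ) := by omega
  conv_lhs => rw [h]
  rw [zpow_sub₀ ht, zpow_natCast, zpow_natCast]
  ring

lemma isLP_monom (a : ℂ) (n : ℤ) : IsLP (fun t _ => a * t ^ (-n)) := by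
  refine ⟨n.toNat, C (C a) * X ^ ((-n).toNat), fun t ht ξ => ?_⟩
  show a * t ^ (-n) = _
  rw [ev2_mul, ev2_C, ev2_X_pow, zpow_split t ht n]
  simp
  ring

lemma isLP_xi_monom (n : ℤ) : IsLP (fun t ξ => ξ * t ^ (-n)) := by
  refine ⟨n.toNat, C X * X ^ ((-n).toNat), fun t ht ξ => ?_⟩
  show ξ * t ^ (-n) = _
  rw [ev2_mul, ev2_C, ev2_X_pow, zpow_split t ht n]
  simp
  ring

lemma isLP_sum {ι : Type*} (s : Finset ι) (f : ι → ℂ → ℂ → ℂ)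
    (h : ∀ i ∈ s, IsLP (f i)) : IsLP (fun t ξ => ∑ i ∈ s, f i t ξ) := by
  classical
  induction s using Finset.induction_on with
  | empty => simpa using isLP_const 0
  | insert a s hnotmem ih =>
    have h1 : IsLP (f a) := h a (Finset.mem_insert_self a s)
    have h2 : IsLP (fun t ξ => ∑ i ∈ s, f i t ξ) :=
      ih fun i hi => h i (Finset.mem_insert_of_mem hi)
    have := h1.add h2
    convert this using 2
    ext ξ
    rw [Finset.sum_insert hnotmem]

lemma isLP_val (φ : FracSeries) : IsLP (fun t ξ => φ.val t ξ) := by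
  have h1 : IsLP (fun t ξ => ∑ k ∈ Finset.univ.filter (fun k : Fin φ.K => k.val + 1 < φ.K),
      φ.a k * t ^ (-(φ.n k))) :=
    isLP_sum _ _ fun k _ => isLP_monom (φ.a k) (φ.n k)
  have h2 : IsLP (fun t ξ => ξ * t ^ (-(φ.ordK))) := isLP_xi_monom φ.ordK
  exact h1.add h2

lemma isLP_x (φ : FracSeries) : IsLP (fun t ξ => t ^ (-(φ.m : ℤ))) := by
  have := isLP_monom 1 (φ.m : ℤ)
  convert this using 2
  ext ξ
  rw [one_mul]

lemma isLP_pev (P : MvPolynomial (Fin 2) ℂ) (φ : FracSeries) :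
    IsLP (fun t ξ => pev P (t ^ (-(φ.m : ℤ)), φ.val t ξ)) := by
  induction P using MvPolynomial.induction_on with
  | C a =>
    convert isLP_const a using 2
    ext ξ
    simp [pev]
  | add p q hp hq =>
    have := hp.add hq
    convert this using 2
    ext ξ
    simp [pev]
  | mul_X p i hp =>
    fin_cases i
    · have := hp.mul (isLP_x φ)
      convert this using 2
      ext ξ
      simp [pev]
    · have := hp.mul (isLP_val φ)
      convert this using 2
      ext ξ
      simp [pev]

end S5

/-- **Lemma 6 (i).** If `φ` is a Newton-Puiseux type of `P` which is not a dicritical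
series of `f`, then `deg p_φ = 1`, `q_φ ≡ const ≠ 0` and `b_φ > 0`.  Here
`Q(x,φ(x,ξ)) = q_φ(ξ) x^{b_φ/mult(φ)} + lower order terms in x`, which in the variable
`t` (`x = t^{-m}`) reads `t^{b_φ}·Q(t^{-m},φ) → q_φ(ξ)` as `t → 0`, with `q_φ ≠ 0`. -/
theorem statement5 (P Q : MvPolynomial (Fin 2) ℂ) (c : ℂ) (hc : c ≠ 0)
    (hJ : jac P Q = MvPolynomial.C c)
    (hPm : MonicInY P) (hQm : MonicInY Q)
    (φ : FracSeries) (pφ : Polynomial ℂ)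
    (hNP : IsNewtonPuiseuxType P φ pφ)
    (hnd : ¬ ∃ fφ : ℂ → ℂ × ℂ, IsDicriticalSeries (polyMap P Q) φ fφ)
    (bφ : ℤ) (qφ : Polynomial ℂ) (hqφ : qφ ≠ 0)
    (hlead : ∀ ξ : ℂ,
      Filter.Tendsto (fun t : ℂ => t ^ bφ * pev Q (t ^ (-(φ.m : ℤ)), φ.val t ξ))
        (𝓝[≠] (0 : ℂ)) (𝓝 (qφ.eval ξ))) :
    pφ.natDegree = 1 ∧ (∃ c₀ : ℂ, c₀ ≠ 0 ∧ qφ = Polynomial.C c₀) ∧ 0 < bφ := by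
  classical
  have hK : 0 < pφ.natDegree := hNP.1
  -- Step A : bφ > 0
  have hbpos : 0 < bφ := by
    by_contra hb
    push_neg at hb
    apply hnd
    rcases eq_or_lt_of_le hb with heq | hlt
    · refine ⟨fun ξ => (pφ.eval ξ, qφ.eval ξ), ⟨pφ, qφ, fun ξ => rfl, Or.inl hK⟩, fun ξ => ?_⟩
      refine Filter.Tendsto.prodMk_nhds (hNP.2 ξ) ?_
      have h := hlead ξ
      rw [heq] at h
      simpa using h
    · refine ⟨fun ξ => (pφ.eval ξ, 0), ⟨pφ, 0, fun ξ => by simp, Or.inl hK⟩, fun ξ => ?_⟩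
      refine Filter.Tendsto.prodMk_nhds (hNP.2 ξ) ?_
      have hzp : Filter.Tendsto (fun t : ℂ => t ^ ((-bφ).toNat)) (𝓝[≠] 0) (𝓝 0) := by
        have hpos : (-bφ).toNat ≠ 0 := by omega
        have := (continuous_pow ((-bφ).toNat)).tendsto (0 : ℂ)
        rw [zero_pow hpos] at this
        exact this.mono_left nhdsWithin_le_nhds
      have h1 : Filter.Tendsto
          (fun t : ℂ => t ^ ((-bφ).toNat) * (t ^ bφ * pev Q (t ^ (-(φ.m : ℤ)), φ.val t ξ)))
          (𝓝[≠] 0) (𝓝 (0 * qφ.eval ξ)) := hzp.mul (hlead ξ)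
      rw [zero_mul] at h1
      refine h1.congr' ?_
      filter_upwards [self_mem_nhdsWithin] with t ht
      have ht' : (t : ℂ) ≠ 0 := ht
      rw [← zpow_natCast t ((-bφ).toNat), Int.toNat_of_nonneg (by omega : (0:ℤ) ≤ -bφ),
        ← mul_assoc, ← zpow_add₀ ht', neg_add_cancel, zpow_zero, one_mul]
  -- Notation
  have hm0 : 0 < φ.m := φ.hm
  set nK := φ.ordK with hnKdef
  set b := bφ.toNat with hbdef
  have hbb : (b : ℤ) = bφ := Int.toNat_of_nonneg hbpos.le
  have hbne : (b : ℂ) ≠ 0 := by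
    have : b ≠ 0 := by omega
    exact_mod_cast this
  have hmne : ((φ.m : ℕ) : ℂ) ≠ 0 := Nat.cast_ne_zero.mpr hm0.ne'
  -- Laurent representation of P along the series
  obtain ⟨M, R, hR0⟩ := S5.isLP_pev P φ
  have hR : ∀ t : ℂ, t ≠ 0 → ∀ ξ : ℂ,
      pev P (t ^ (-(φ.m : ℤ)), φ.val t ξ) = (t ^ M)⁻¹ * S5.ev2 R t ξ := hR0
  obtain ⟨S, hS, hS0⟩ := S5.extract2 M R pφ (fun ξ => by
    refine (hNP.2 ξ).congr' ?_
    filter_upwards [self_mem_nhdsWithin] with t ht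
    exact hR t ht ξ)
  have hF : ∀ t : ℂ, t ≠ 0 → ∀ ξ : ℂ,
      pev P (t ^ (-(φ.m : ℤ)), φ.val t ξ) = S5.ev2 S t ξ := by
    intro t ht ξ
    rw [hR t ht ξ, hS t ξ, ← mul_assoc, inv_mul_cancel₀ (pow_ne_zero _ ht), one_mul]
  -- Laurent representation of Q along the series
  obtain ⟨N, R', hR'0⟩ := S5.isLP_pev Q φ
  have hR' : ∀ t : ℂ, t ≠ 0 → ∀ ξ : ℂ,
      pev Q (t ^ (-(φ.m : ℤ)), φ.val t ξ) = (t ^ N)⁻¹ * S5.ev2 R' t ξ := hR'0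
  obtain ⟨S', hS', hS'0⟩ := S5.extract2 N (Polynomial.X ^ b * R') qφ (fun ξ => by
    refine (hlead ξ).congr' ?_
    filter_upwards [self_mem_nhdsWithin] with t ht
    have ht' : (t : ℂ) ≠ 0 := ht
    rw [hR' t ht ξ, S5.ev2_mul, S5.ev2_X_pow, ← hbb, zpow_natCast]
    ring)
  have hG : ∀ t : ℂ, t ≠ 0 → ∀ ξ : ℂ,
      pev Q (t ^ (-(φ.m : ℤ)), φ.val t ξ) = (t ^ b)⁻¹ * S5.ev2 S' t ξ := by
    intro t ht ξ
    have h1 := hS' t ξ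
    rw [S5.ev2_mul, S5.ev2_X_pow] at h1
    have hN : (t : ℂ) ^ N ≠ 0 := pow_ne_zero _ ht
    have hb' : (t : ℂ) ^ b ≠ 0 := pow_ne_zero _ ht
    rw [hR' t ht ξ]
    field_simp
    rw [mul_comm (S5.ev2 R' t ξ) (t ^ b), h1]
  -- The key identity coming from the constancy of the Jacobian
  have key : ∀ t : ℂ, t ≠ 0 → ∀ ξ : ℂ,
      t * S5.ev2 (Polynomial.derivative S) t ξ * S5.ev2 (S5.Dxi S') t ξ
        - t * S5.ev2 (S5.Dxi S) t ξ * S5.ev2 (Polynomial.derivative S') t ξ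
        + (b : ℂ) * S5.ev2 (S5.Dxi S) t ξ * S5.ev2 S' t ξ
      = -(c * (φ.m : ℂ)) * t ^ ((b : ℤ) - (φ.m : ℤ) - nK) := by
    intro T hT ξ
    have hopen : ∀ᶠ t in 𝓝 T, t ∈ {t : ℂ | t ≠ 0} :=
      (isOpen_compl_singleton (x := (0:ℂ))).eventually_mem hT
    -- derivatives of the substituted curve
    have hx : HasDerivAt (fun t : ℂ => t ^ (-(φ.m : ℤ)))
        (((-(φ.m : ℤ) : ℤ) : ℂ) * T ^ (-(φ.m : ℤ) - 1)) T :=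
      hasDerivAt_zpow _ _ (Or.inl hT)
    have hy1 : HasDerivAt (fun t : ℂ =>
        (∑ k ∈ Finset.univ.filter (fun k : Fin φ.K => k.val + 1 < φ.K), φ.a k * t ^ (-(φ.n k)))
          + ξ * t ^ (-(φ.ordK)))
        ((∑ k ∈ Finset.univ.filter (fun k : Fin φ.K => k.val + 1 < φ.K),
            φ.a k * (((-(φ.n k) : ℤ) : ℂ) * T ^ (-(φ.n k) - 1)))
          + ξ * (((-(φ.ordK) : ℤ) : ℂ) * T ^ (-(φ.ordK) - 1))) T :=
      (HasDerivAt.fun_sum fun k _ =>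
        ((hasDerivAt_zpow (-(φ.n k)) T (Or.inl hT)).const_mul (φ.a k))).add
        ((hasDerivAt_zpow (-(φ.ordK)) T (Or.inl hT)).const_mul ξ)
    obtain ⟨Yt, hy⟩ : ∃ Y, HasDerivAt (fun t : ℂ => φ.val t ξ) Y T := ⟨_, hy1⟩
    have hyξ : HasDerivAt (fun ξ' : ℂ => φ.val T ξ') (T ^ (-nK)) ξ := by
      unfold FracSeries.val
      simpa using ((hasDerivAt_id ξ).mul_const (T ^ (-(φ.ordK)))).const_add
        (∑ k ∈ Finset.univ.filter (fun k : Fin φ.K => k.val + 1 < φ.K), φ.a k * T ^ (-(φ.n k)))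
    -- abbreviations for partial derivatives at the point
    set pt : ℂ × ℂ := (T ^ (-(φ.m : ℤ)), φ.val T ξ) with hpt
    set A := pev (MvPolynomial.pderiv 0 P) pt with hA
    set B := pev (MvPolynomial.pderiv 1 P) pt with hB
    set A' := pev (MvPolynomial.pderiv 0 Q) pt with hA'
    set B' := pev (MvPolynomial.pderiv 1 Q) pt with hB'
    set X' : ℂ := ((-(φ.m : ℤ) : ℤ) : ℂ) * T ^ (-(φ.m : ℤ) - 1) with hX'
    -- t-derivative of P along the curve, two ways
    have hFt_chain : HasDerivAt (fun t => pev P (t ^ (-(φ.m : ℤ)), φ.val t ξ))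
        (A * X' + B * Yt) T := S5.pev_hasDerivAt P _ _ hx hy
    have hFt_ev2 : HasDerivAt (fun t => pev P (t ^ (-(φ.m : ℤ)), φ.val t ξ))
        (S5.ev2 (Polynomial.derivative S) T ξ) T := by
      refine (S5.hasDerivAt_ev2_t S T ξ).congr_of_eventuallyEq ?_
      filter_upwards [hopen] with t ht
      exact hF t ht ξ
    have e1 : A * X' + B * Yt = S5.ev2 (Polynomial.derivative S) T ξ :=
      hFt_chain.unique hFt_ev2
    -- ξ-derivative of P along the curve, two ways
    have hFξ_chain : HasDerivAt (fun ξ' => pev P (T ^ (-(φ.m : ℤ)), φ.val T ξ'))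
        (A * 0 + B * T ^ (-nK)) ξ :=
      S5.pev_hasDerivAt P (fun _ => T ^ (-(φ.m : ℤ))) (fun ξ' => φ.val T ξ')
        (hasDerivAt_const ξ _) hyξ
    have hFξ_ev2 : HasDerivAt (fun ξ' => pev P (T ^ (-(φ.m : ℤ)), φ.val T ξ'))
        (S5.ev2 (S5.Dxi S) T ξ) ξ := by
      have : (fun ξ' => pev P (T ^ (-(φ.m : ℤ)), φ.val T ξ')) = fun ξ' => S5.ev2 S T ξ' :=
        funext fun ξ' => hF T hT ξ'
      rw [this]
      exact S5.hasDerivAt_ev2_xi S T ξ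
    have e2 : A * 0 + B * T ^ (-nK) = S5.ev2 (S5.Dxi S) T ξ := hFξ_chain.unique hFξ_ev2
    -- t-derivative of Q along the curve, two ways
    have hGt_chain : HasDerivAt (fun t => pev Q (t ^ (-(φ.m : ℤ)), φ.val t ξ))
        (A' * X' + B' * Yt) T := S5.pev_hasDerivAt Q _ _ hx hy
    have hGt_ev2 : HasDerivAt (fun t => pev Q (t ^ (-(φ.m : ℤ)), φ.val t ξ))
        (((-(b : ℤ) : ℤ) : ℂ) * T ^ (-(b : ℤ) - 1) * S5.ev2 S' T ξ
          + T ^ (-(b : ℤ)) * S5.ev2 (Polynomial.derivative S') T ξ) T := by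
      refine HasDerivAt.congr_of_eventuallyEq
        ((hasDerivAt_zpow (-(b : ℤ)) T (Or.inl hT)).mul (S5.hasDerivAt_ev2_t S' T ξ)) ?_
      filter_upwards [hopen] with t ht
      rw [hG t ht ξ]; simp only [Pi.mul_apply, zpow_neg, zpow_natCast]
    have e3 : A' * X' + B' * Yt
        = ((-(b : ℤ) : ℤ) : ℂ) * T ^ (-(b : ℤ) - 1) * S5.ev2 S' T ξ
          + T ^ (-(b : ℤ)) * S5.ev2 (Polynomial.derivative S') T ξ :=
      hGt_chain.unique hGt_ev2
    -- ξ-derivative of Q along the curve, two ways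
    have hGξ_chain : HasDerivAt (fun ξ' => pev Q (T ^ (-(φ.m : ℤ)), φ.val T ξ'))
        (A' * 0 + B' * T ^ (-nK)) ξ :=
      S5.pev_hasDerivAt Q (fun _ => T ^ (-(φ.m : ℤ))) (fun ξ' => φ.val T ξ')
        (hasDerivAt_const ξ _) hyξ
    have hGξ_ev2 : HasDerivAt (fun ξ' => pev Q (T ^ (-(φ.m : ℤ)), φ.val T ξ'))
        ((T ^ b)⁻¹ * S5.ev2 (S5.Dxi S') T ξ) ξ := by
      have : (fun ξ' => pev Q (T ^ (-(φ.m : ℤ)), φ.val T ξ'))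
          = fun ξ' => (T ^ b)⁻¹ * S5.ev2 S' T ξ' := funext fun ξ' => hG T hT ξ'
      rw [this]
      exact (S5.hasDerivAt_ev2_xi S' T ξ).const_mul _
    have e4 : A' * 0 + B' * T ^ (-nK) = (T ^ b)⁻¹ * S5.ev2 (S5.Dxi S') T ξ :=
      hGξ_chain.unique hGξ_ev2
    -- Jacobian is the constant c
    have e5 : A * B' - B * A' = c := by
      have h := congrArg (fun R => pev R pt) hJ
      simpa [pev, jac, hA, hB, hA', hB'] using h
    -- solve e3, e4 for the ev2-values
    have hTb : (T : ℂ) ^ b ≠ 0 := pow_ne_zero _ hT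
    have hHξ : S5.ev2 (S5.Dxi S') T ξ = T ^ b * (A' * 0 + B' * T ^ (-nK)) := by
      rw [e4, ← mul_assoc, mul_inv_cancel₀ hTb, one_mul]
    have hzz : T ^ ((b : ℤ)) * T ^ (-(b : ℤ)) = 1 := by
      rw [← zpow_add₀ hT]; simp
    have hz1 : T ^ ((b : ℤ)) * T ^ (-(b : ℤ) - 1) = T ^ ((-1 : ℤ)) := by
      rw [← zpow_add₀ hT]; ring_nf
    have hHt : S5.ev2 (Polynomial.derivative S') T ξ
        = T ^ ((b : ℤ)) * (A' * X' + B' * Yt)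
          + (b : ℂ) * T ^ ((-1 : ℤ)) * S5.ev2 S' T ξ := by
      push_cast at e3
      linear_combination (-(T ^ ((b : ℤ)))) * e3
        - (S5.ev2 (Polynomial.derivative S') T ξ) * hzz
        + ((b : ℂ) * S5.ev2 S' T ξ) * hz1
    have hTi : T * T ^ ((-1 : ℤ)) = 1 := by
      rw [zpow_neg_one, mul_inv_cancel₀ hT]
    have hpow : T ^ ((b : ℤ) - (φ.m : ℤ) - nK)
        = T ^ ((b : ℤ)) * T * T ^ (-(φ.m : ℤ) - 1) * T ^ (-nK) := by
      rw [show (b : ℤ) - (φ.m : ℤ) - nK = (b : ℤ) + 1 + (-(φ.m : ℤ) - 1) + (-nK) by ring,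
        zpow_add₀ hT, zpow_add₀ hT, zpow_add₀ hT, zpow_one]
    rw [← e1, ← e2, hHξ, hHt, hpow, hX']
    push_cast
    rw [zpow_natCast T b]
    push_cast at e5
    linear_combination (T * (T^b) * T ^ (-nK) * (-((φ.m:ℤ):ℂ) * T ^ (-(φ.m : ℤ) - 1))) * e5
      + (-(b:ℂ) * B * T ^ (-nK) * S5.ev2 S' T ξ) * hTi
  -- the limit of the left-hand side as t → 0
  have hpφ' : pφ.derivative ≠ 0 := fun h =>
    hK.ne' (Polynomial.natDegree_eq_zero_of_derivative_eq_zero h)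
  have hLlim : ∀ ξ : ℂ, Filter.Tendsto
      (fun t : ℂ => -(c * (φ.m : ℂ)) * t ^ ((b : ℤ) - (φ.m : ℤ) - nK)) (𝓝[≠] 0)
      (𝓝 ((b : ℂ) * pφ.derivative.eval ξ * qφ.eval ξ)) := by
    intro ξ
    have hcont : Continuous (fun t : ℂ =>
        t * S5.ev2 (Polynomial.derivative S) t ξ * S5.ev2 (S5.Dxi S') t ξ
          - t * S5.ev2 (S5.Dxi S) t ξ * S5.ev2 (Polynomial.derivative S') t ξ
          + (b : ℂ) * S5.ev2 (S5.Dxi S) t ξ * S5.ev2 S' t ξ) := by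
      exact (((continuous_id.mul (S5.ev2_continuous _ ξ)).mul (S5.ev2_continuous _ ξ)).sub
        ((continuous_id.mul (S5.ev2_continuous _ ξ)).mul (S5.ev2_continuous _ ξ))).add
        ((continuous_const.mul (S5.ev2_continuous _ ξ)).mul (S5.ev2_continuous _ ξ))
    have h0 : (0 : ℂ) * S5.ev2 (Polynomial.derivative S) 0 ξ * S5.ev2 (S5.Dxi S') 0 ξ
          - 0 * S5.ev2 (S5.Dxi S) 0 ξ * S5.ev2 (Polynomial.derivative S') 0 ξ
          + (b : ℂ) * S5.ev2 (S5.Dxi S) 0 ξ * S5.ev2 S' 0 ξ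
        = (b : ℂ) * pφ.derivative.eval ξ * qφ.eval ξ := by
      simp only [zero_mul, mul_zero, sub_zero, zero_sub, zero_add, neg_zero]
      rw [S5.ev2_Dxi_zero S ξ, S5.ev2_zero_left S' ξ, hS0, hS'0]
    have := (hcont.tendsto 0).mono_left (nhdsWithin_le_nhds (s := {(0:ℂ)}ᶜ))
    rw [h0] at this
    refine this.congr' ?_
    filter_upwards [self_mem_nhdsWithin] with t ht
    exact key t ht ξ
  -- case analysis on the exponent
  rcases lt_trichotomy ((b : ℤ) - (φ.m : ℤ) - nK) 0 with he | he | he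
  · -- negative exponent : contradiction with c ≠ 0
    exfalso
    have hzp : Filter.Tendsto (fun t : ℂ => t ^ ((-((b : ℤ) - (φ.m : ℤ) - nK)).toNat)) (𝓝[≠] 0) (𝓝 0) := by
      have hpos : (-((b : ℤ) - (φ.m : ℤ) - nK)).toNat ≠ 0 := by omega
      have := (continuous_pow ((-((b : ℤ) - (φ.m : ℤ) - nK)).toNat)).tendsto (0 : ℂ)
      rw [zero_pow hpos] at this
      exact this.mono_left nhdsWithin_le_nhds
    have h1 : Filter.Tendsto (fun t : ℂ => t ^ ((-((b : ℤ) - (φ.m : ℤ) - nK)).toNat) * (-(c * (φ.m : ℂ)) * t ^ ((b : ℤ) - (φ.m : ℤ) - nK)))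
        (𝓝[≠] 0) (𝓝 (0 * ((b : ℂ) * pφ.derivative.eval 0 * qφ.eval 0))) :=
      hzp.mul (hLlim 0)
    rw [zero_mul] at h1
    have h2 : Filter.Tendsto (fun _ : ℂ => -(c * (φ.m : ℂ))) (𝓝[≠] (0:ℂ))
        (𝓝 (-(c * (φ.m : ℂ)))) := tendsto_const_nhds
    have h3 : -(c * (φ.m : ℂ)) = 0 := by
      refine tendsto_nhds_unique (h2.congr' ?_) h1
      filter_upwards [self_mem_nhdsWithin] with t ht
      have ht' : (t : ℂ) ≠ 0 := ht
      rw [← zpow_natCast t ((-((b : ℤ) - (φ.m : ℤ) - nK)).toNat), Int.toNat_of_nonneg (by omega : (0:ℤ) ≤ -((b : ℤ) - (φ.m : ℤ) - nK)),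
        ← mul_assoc, mul_comm (t ^ (-((b : ℤ) - (φ.m : ℤ) - nK))) (-(c * (φ.m : ℂ))), mul_assoc,
        ← zpow_add₀ ht', neg_add_cancel, zpow_zero, mul_one]
    rw [neg_eq_zero, mul_eq_zero] at h3
    rcases h3 with h | h
    · exact hc h
    · exact hmne h
  · -- zero exponent : the main case
    have hconst : ∀ ξ : ℂ, (b : ℂ) * pφ.derivative.eval ξ * qφ.eval ξ = -(c * (φ.m : ℂ)) := by
      intro ξ
      have h := hLlim ξ
      rw [he] at h
      simp only [zpow_zero, mul_one] at h
      exact tendsto_nhds_unique h tendsto_const_nhds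
    have hpoly : Polynomial.C ((b : ℂ)) * pφ.derivative * qφ
        = Polynomial.C (-(c * (φ.m : ℂ))) :=
      Polynomial.funext fun ξ => by simpa using hconst ξ
    have hCne : -(c * ((φ.m : ℕ) : ℂ)) ≠ 0 := by
      simp only [ne_eq, neg_eq_zero, mul_eq_zero, not_or]
      exact ⟨hc, by exact_mod_cast hm0.ne'⟩
    have hCb : (Polynomial.C ((b : ℂ)) : Polynomial ℂ) ≠ 0 := by
      simpa using hbne
    have hdeg : (Polynomial.C ((b : ℂ)) * pφ.derivative).natDegree + qφ.natDegree = 0 := by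
      rw [← Polynomial.natDegree_mul (mul_ne_zero hCb hpφ') hqφ, hpoly, Polynomial.natDegree_C]
    have hqdeg : qφ.natDegree = 0 := by omega
    have hpd_deg : pφ.derivative.natDegree = 0 := by
      have h1 : (Polynomial.C ((b : ℂ)) * pφ.derivative).natDegree = 0 := by omega
      rw [Polynomial.natDegree_mul hCb hpφ', Polynomial.natDegree_C] at h1
      omega
    -- conclusions
    refine ⟨?_, ⟨qφ.coeff 0, ?_, Polynomial.eq_C_of_natDegree_eq_zero hqdeg⟩, hbpos⟩
    · -- pφ.natDegree = 1
      by_contra hne1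
      have h2 : 2 ≤ pφ.natDegree := by omega
      have hlc : pφ.coeff pφ.natDegree ≠ 0 := by
        refine Polynomial.coeff_ne_zero_of_eq_degree ?_
        rw [Polynomial.degree_eq_natDegree (fun h => by simp [h] at hK)]
      have hco := Polynomial.coeff_derivative pφ (pφ.natDegree - 1)
      rw [show pφ.natDegree - 1 + 1 = pφ.natDegree by omega] at hco
      have hzero : pφ.derivative.coeff (pφ.natDegree - 1) = 0 :=
        Polynomial.coeff_eq_zero_of_natDegree_lt (by omega)
      rw [hzero] at hco
      have : pφ.coeff pφ.natDegree * ((pφ.natDegree - 1 : ℕ) + 1 : ℂ) ≠ 0 := by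
        refine mul_ne_zero hlc ?_
        have : ((pφ.natDegree - 1 : ℕ) + 1 : ℂ) = ((pφ.natDegree - 1 + 1 : ℕ) : ℂ) := by
          push_cast; ring
        rw [this]
        exact_mod_cast (by omega : pφ.natDegree - 1 + 1 ≠ 0)
      exact this hco.symm
    · -- qφ.coeff 0 ≠ 0
      intro h0
      apply hqφ
      rw [Polynomial.eq_C_of_natDegree_eq_zero hqdeg, h0, map_zero]
  · -- positive exponent : contradiction with pφ' , qφ ≠ 0
    exfalso
    have hzp : Filter.Tendsto (fun t : ℂ => -(c * (φ.m : ℂ)) * t ^ ((b : ℤ) - (φ.m : ℤ) - nK)) (𝓝[≠] 0) (𝓝 0) := by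
      have hpos : ((b : ℤ) - (φ.m : ℤ) - nK).toNat ≠ 0 := by omega
      have h1 := ((continuous_pow (((b : ℤ) - (φ.m : ℤ) - nK).toNat)).tendsto (0 : ℂ)).const_mul (-(c * (φ.m : ℂ)))
      rw [zero_pow hpos, mul_zero] at h1
      refine (h1.mono_left nhdsWithin_le_nhds).congr (fun t => ?_)
      rw [← zpow_natCast t (((b : ℤ) - (φ.m : ℤ) - nK).toNat), Int.toNat_of_nonneg (by omega : (0:ℤ) ≤ ((b : ℤ) - (φ.m : ℤ) - nK))]
    have hzero : ∀ ξ : ℂ, (b : ℂ) * pφ.derivative.eval ξ * qφ.eval ξ = 0 := fun ξ =>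
      tendsto_nhds_unique (hLlim ξ) hzp
    have hpoly : Polynomial.C ((b : ℂ)) * pφ.derivative * qφ = 0 :=
      Polynomial.funext fun ξ => by simpa using hzero ξ
    have hCb : (Polynomial.C ((b : ℂ)) : Polynomial ℂ) ≠ 0 := by simpa using hbne
    rcases mul_eq_zero.mp hpoly with h | h
    · rcases mul_eq_zero.mp h with h' | h'
      · exact hCb h'
      · exact hpφ' h'
    · exact hqφ h
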